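/- Let R = Mat_2(Z_p), and let I, J be left ideals of R generated by [[p^{n},t],[0,p^{m}]] and [[p^{n'},t'],[0,p^{m'}]] respectively. Then I ⊆ J if and only if n ≥ n', m ≥ m', and t ≡ t'·p^{n−n'} (mod p^{m'}). -/

import Mathlib

open Matrix

/-- The matrix `[[p^n, t],[0, p^m]]` over `ℤ_[p]`. -/
noncomputable def genMat (p : ℕ) [Fact p.Prime] (n m : ℕ) (t : ℤ_[p]) :
    Matrix (Fin 2) (Fin 2) ℤ_[p] :=
  !![(p : ℤ_[p]) ^ n, t; 0, (p : ℤ_[p]) ^ m]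

lemma padic_p_ne_zero (p : ℕ) [Fact p.Prime] : (p : ℤ_[p]) ≠ 0 := by
  exact_mod_cast (Nat.cast_ne_zero (R := ℤ_[p])).2 (Fact.out (p := p.Prime)).ne_zero

lemma padic_p_not_unit (p : ℕ) [Fact p.Prime] : ¬IsUnit (p : ℤ_[p]) :=
  PadicInt.irreducible_p.not_isUnit

/-- Containment of left ideals in `Mat₂(ℤ_p)`: the left ideal generated by
`[[p^n,t],[0,p^m]]` is contained in the one generated by `[[p^{n'},t'],[0,p^{m'}]]` iff
`n ≥ n'`, `m ≥ m'` and `t ≡ t'·p^{n−n'} (mod p^{m'})`. -/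
theorem stmt16 (p : ℕ) [Fact p.Prime] (n m n' m' : ℕ) (t t' : ℤ_[p]) :
    Ideal.span {genMat p n m t} ≤ Ideal.span {genMat p n' m' t'} ↔
      (n' ≤ n ∧ m' ≤ m ∧ (p : ℤ_[p]) ^ m' ∣ (t - t' * (p : ℤ_[p]) ^ (n - n'))) := by
  rw [Ideal.span_singleton_le_iff_mem, Ideal.mem_span_singleton']
  have hp0 : (p : ℤ_[p]) ≠ 0 := padic_p_ne_zero p
  constructor
  · rintro ⟨C, hC⟩
    rw [Matrix.eta_fin_two C] at hC
    simp only [genMat, Matrix.mul_fin_two] at hC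
    have h00 : C 0 0 * (p : ℤ_[p]) ^ n' = (p : ℤ_[p]) ^ n := by
      have := congrFun (congrFun hC 0) 0
      simpa using this
    have h01 : C 0 0 * t' + C 0 1 * (p : ℤ_[p]) ^ m' = t := by
      have := congrFun (congrFun hC 0) 1
      simpa using this
    have h10 : C 1 0 * (p : ℤ_[p]) ^ n' = 0 := by
      have := congrFun (congrFun hC 1) 0
      simpa using this
    have h11 : C 1 0 * t' + C 1 1 * (p : ℤ_[p]) ^ m' = (p : ℤ_[p]) ^ m := by
      have := congrFun (congrFun hC 1) 1
      simpa using this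
    have hc0 : C 1 0 = 0 := by
      rcases mul_eq_zero.1 h10 with h | h
      · exact h
      · exact absurd h (pow_ne_zero _ hp0)
    rw [hc0, zero_mul, zero_add] at h11
    have hn : n' ≤ n := by
      rw [← pow_dvd_pow_iff hp0 (padic_p_not_unit p)]
      exact ⟨C 0 0, by rw [mul_comm]; exact h00.symm⟩
    have hm : m' ≤ m := by
      rw [← pow_dvd_pow_iff hp0 (padic_p_not_unit p)]
      exact ⟨C 1 1, by rw [mul_comm]; exact h11.symm⟩
    have ha : C 0 0 = (p : ℤ_[p]) ^ (n - n') := by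
      have : C 0 0 * (p : ℤ_[p]) ^ n' = (p : ℤ_[p]) ^ (n - n') * (p : ℤ_[p]) ^ n' := by
        rw [h00, ← pow_add, Nat.sub_add_cancel hn]
      exact mul_right_cancel₀ (pow_ne_zero _ hp0) this
    refine ⟨hn, hm, ⟨C 0 1, ?_⟩⟩
    rw [← h01, ha]
    ring
  · rintro ⟨hn, hm, b, hb⟩
    refine ⟨!![(p : ℤ_[p]) ^ (n - n'), b; 0, (p : ℤ_[p]) ^ (m - m')], ?_⟩
    have e1 : (p : ℤ_[p]) ^ (n - n') * (p : ℤ_[p]) ^ n' = (p : ℤ_[p]) ^ n := by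
      rw [← pow_add, Nat.sub_add_cancel hn]
    have e2 : (p : ℤ_[p]) ^ (m - m') * (p : ℤ_[p]) ^ m' = (p : ℤ_[p]) ^ m := by
      rw [← pow_add, Nat.sub_add_cancel hm]
    have e3 : (p : ℤ_[p]) ^ (n - n') * t' + b * (p : ℤ_[p]) ^ m' = t := by
      rw [mul_comm b]; linear_combination -hb
    ext i j
    fin_cases i <;> fin_cases j <;>
      simp [genMat, Matrix.mul_fin_two, e1, e2, e3]
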